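/- Let β > 1, η > 0, n ≥ 1, and suppose players' beliefs are point masses at posterior means β̂_x = (x + n·Z̄_n)/(n+1) for priors x ∈ [-η, η], where Z̄_n is the mean of n i.i.d. N(β,1) observations. In the coordination game where Strong is δ-strictly rationalizable at the limit with δ^∞ = β - 1, the probability that Strong is rationalizable for all types with common certainty that first-order beliefs have support in {β̂_x : x ∈ [-η,η]} is at least 1 - (1/(β-1))·(√(2/(πn)) + (β+η)/(n+1)). -/

import Mathlib

open MeasureTheory ProbabilityTheory Finset

open Real Filter Set
open scoped NNReal ENNReal


lemma integral_Ioi_mul_exp_neg_mul_sq {b : ℝ} (hb : 0 < b) :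
    ∫ x in Ioi (0:ℝ), x * rexp (-b * x^2) = (2*b)⁻¹ := by
  have A : ∀ x : ℝ, HasDerivAt (fun y => -(2*b)⁻¹ * rexp (-b * y^2)) (x * rexp (-b * x^2)) x := by
    intro x
    convert ((hasDerivAt_pow 2 x).const_mul (-b)).exp.const_mul (-(2*b)⁻¹) using 1
    · rfl
    · rfl
    field_simp
    ring
  have B : Tendsto (fun y : ℝ => -(2*b)⁻¹ * rexp (-b * y^2)) atTop (nhds (-(2*b)⁻¹ * 0)) := by
    refine Tendsto.const_mul _ ?_
    apply Real.tendsto_exp_atBot.comp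
    exact (tendsto_pow_atTop two_ne_zero).const_mul_atTop_of_neg (neg_lt_zero.2 hb)
  have := integral_Ioi_of_hasDerivAt_of_tendsto' (a := 0) (fun x _ => A x)
    (integrable_mul_exp_neg_mul_sq hb).integrableOn B
  rw [this]
  norm_num

lemma integrable_abs_mul_exp_neg_mul_sq {b : ℝ} (hb : 0 < b) :
    Integrable (fun x : ℝ => |x| * rexp (-b * x^2)) := by
  have h := (integrable_mul_exp_neg_mul_sq hb).abs
  refine h.congr (Eventually.of_forall fun x => ?_)
  simp only [abs_mul, abs_of_nonneg (Real.exp_nonneg _)]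

lemma integral_abs_mul_exp_neg_mul_sq {b : ℝ} (hb : 0 < b) :
    ∫ x : ℝ, |x| * rexp (-b * x^2) = b⁻¹ := by
  have hsplit : ∫ x : ℝ, |x| * rexp (-b * x^2)
      = (∫ x in Iic (0:ℝ), |x| * rexp (-b * x^2)) + ∫ x in Ioi (0:ℝ), |x| * rexp (-b * x^2) := by
    rw [← intervalIntegral.integral_Iic_add_Ioi (integrable_abs_mul_exp_neg_mul_sq hb).integrableOn
      (integrable_abs_mul_exp_neg_mul_sq hb).integrableOn]
  have h1 : ∫ x in Ioi (0:ℝ), |x| * rexp (-b * x^2) = (2*b)⁻¹ := by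
    rw [setIntegral_congr_fun measurableSet_Ioi (fun x hx => by
      rw [abs_of_nonneg (le_of_lt hx)])]
    exact integral_Ioi_mul_exp_neg_mul_sq hb
  have h2 : ∫ x in Iic (0:ℝ), |x| * rexp (-b * x^2) = (2*b)⁻¹ := by
    have : ∫ x in Iic (0:ℝ), |x| * rexp (-b * x^2)
        = ∫ x in Iic (0:ℝ), (fun y => |y| * rexp (-b * y^2)) (-x) := by
      refine setIntegral_congr_fun measurableSet_Iic (fun x _ => ?_)
      simp [abs_neg, neg_sq]
    rw [this]
    refine ((integral_comp_neg_Iic 0 (fun y => |y| * rexp (-b * y^2))).trans ?_)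
    rw [neg_zero]
    exact h1
  rw [hsplit, h1, h2]
  rw [mul_inv, ← two_mul, ← mul_assoc, mul_inv_cancel₀ (two_ne_zero), one_mul]

theorem gaussianPDFReal_conv (a b : ℝ) (v w : ℝ≥0) (hv : v ≠ 0) (hw : w ≠ 0) (y : ℝ) :
    ∫ x, gaussianPDFReal a v x * gaussianPDFReal b w (y - x)
      = gaussianPDFReal (a+b) (v+w) y := by
  have hs : (0:ℝ) < v := lt_of_le_of_ne v.2 (by exact_mod_cast hv.symm)
  have ht : (0:ℝ) < w := lt_of_le_of_ne w.2 (by exact_mod_cast hw.symm)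
  set s : ℝ := (v:ℝ) with hsdef
  set t : ℝ := (w:ℝ) with htdef
  set k : ℝ := (s+t)/(2*s*t) with hk
  set c : ℝ := (t*a + s*(y-b))/(s+t) with hc
  have hst : 0 < s + t := by linarith
  have hkpos : 0 < k := by positivity
  have key : ∀ x : ℝ, gaussianPDFReal a v x * gaussianPDFReal b w (y - x)
      = ((√(2*π*s))⁻¹ * (√(2*π*t))⁻¹ * rexp (-(y-(a+b))^2/(2*(s+t))))
          * rexp (-(k*(x-c)^2)) := by
    intro x
    rw [gaussianPDFReal, gaussianPDFReal]
    have hexp : rexp (-(y-(a+b))^2/(2*(s+t))) * rexp (-(k*(x-c)^2))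
        = rexp (-(x-a)^2/(2*s)) * rexp (-(y-x-b)^2/(2*t)) := by
      rw [← Real.exp_add, ← Real.exp_add]
      congr 1
      rw [hk, hc]
      field_simp
      ring
    calc (√(2*π*s))⁻¹ * rexp (-(x-a)^2/(2*s)) * ((√(2*π*t))⁻¹ * rexp (-(y-x-b)^2/(2*t)))
        = (√(2*π*s))⁻¹ * (√(2*π*t))⁻¹ * (rexp (-(x-a)^2/(2*s)) * rexp (-(y-x-b)^2/(2*t))) := by
          ring
      _ = _ := by rw [← hexp]; ring
  rw [integral_congr_ae (Filter.Eventually.of_forall key), integral_const_mul]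
  have hint : ∫ (x:ℝ), rexp (-(k*(x-c)^2)) = √(π/k) := by
    have := integral_sub_right_eq_self (μ := volume) (fun x : ℝ => rexp (-(k*x^2))) c
    rw [show (fun x : ℝ => rexp (-(k*(x-c)^2))) = (fun x : ℝ => rexp (-(k*(x)^2))) ∘ (fun x => x - c) from rfl] at *
    rw [this]
    simp_rw [neg_mul_eq_neg_mul]
    exact integral_gaussian k
  rw [hint, gaussianPDFReal]
  have hcoef : (√(2*π*s))⁻¹ * (√(2*π*t))⁻¹ * √(π/k) = (√(2*π*(s+t)))⁻¹ := by
    rw [← Real.sqrt_inv (2*π*s), ← Real.sqrt_inv (2*π*t), ← Real.sqrt_inv (2*π*(s+t)),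
      ← Real.sqrt_mul (by positivity), ← Real.sqrt_mul (by positivity)]
    congr 1
    rw [hk]
    field_simp
  push_cast
  calc (√(2*π*s))⁻¹ * (√(2*π*t))⁻¹ * rexp (-(y-(a+b))^2/(2*(s+t))) * √(π/k)
      = ((√(2*π*s))⁻¹ * (√(2*π*t))⁻¹ * √(π/k)) * rexp (-(y-(a+b))^2/(2*(s+t))) := by ring
    _ = (√(2*π*(s+t)))⁻¹ * rexp (-(y-(a+b))^2/(2*(s+t))) := by rw [hcoef]

lemma gaussianPDFReal_le (b : ℝ) (w : ℝ≥0) (z : ℝ) :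
    gaussianPDFReal b w z ≤ (√(2*π*w))⁻¹ := by
  rw [gaussianPDFReal]
  have h1 : rexp (-(z - b)^2/(2*w)) ≤ 1 := by
    rw [Real.exp_le_one_iff]
    apply div_nonpos_of_nonpos_of_nonneg
    · simp [sq_nonneg]
    · positivity
  calc (√(2*π*w))⁻¹ * rexp (-(z - b)^2/(2*w)) ≤ (√(2*π*w))⁻¹ * 1 := by
        apply mul_le_mul_of_nonneg_left h1 (by positivity)
    _ = (√(2*π*w))⁻¹ := mul_one _

lemma integrable_gaussian_conv (a b : ℝ) (v w : ℝ≥0) (y : ℝ) :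
    Integrable (fun x => gaussianPDFReal a v x * gaussianPDFReal b w (y - x)) := by
  apply Integrable.mono' ((integrable_gaussianPDFReal a v).const_mul ((√(2*π*w))⁻¹))
  · exact (((measurable_gaussianPDFReal a v).mul
      ((measurable_gaussianPDFReal b w).comp (measurable_const.sub measurable_id))).aestronglyMeasurable)
  · refine Filter.Eventually.of_forall fun x => ?_
    rw [Real.norm_eq_abs, abs_of_nonneg (mul_nonneg (gaussianPDFReal_nonneg a v x) (gaussianPDFReal_nonneg b w _))]
    calc gaussianPDFReal a v x * gaussianPDFReal b w (y - x)
        ≤ gaussianPDFReal a v x * (√(2*π*w))⁻¹ :=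
          mul_le_mul_of_nonneg_left (gaussianPDFReal_le b w _) (gaussianPDFReal_nonneg a v x)
      _ = (√(2*π*w))⁻¹ * gaussianPDFReal a v x := mul_comm _ _

theorem gaussianReal_conv (a b : ℝ) (v w : ℝ≥0) :
    ((gaussianReal a v).prod (gaussianReal b w)).map (fun p : ℝ × ℝ => p.1 + p.2)
      = gaussianReal (a+b) (v+w) := by
  by_cases hv : v = 0
  · subst hv
    rw [gaussianReal_zero_var, Measure.dirac_prod, Measure.map_map (by fun_prop) (by fun_prop)]
    have : ((fun p : ℝ × ℝ => p.1 + p.2) ∘ (Prod.mk a)) = (a + ·) := rfl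
    rw [this, gaussianReal_map_const_add, add_comm b a, zero_add]
  by_cases hw : w = 0
  · subst hw
    rw [gaussianReal_zero_var, Measure.prod_dirac, Measure.map_map (by fun_prop) (by fun_prop)]
    have : ((fun p : ℝ × ℝ => p.1 + p.2) ∘ (fun x => (x, b))) = (· + b) := rfl
    rw [this, gaussianReal_map_add_const, add_zero]
  have hvw : v + w ≠ 0 := by simp [hv, hw]
  ext u hu
  rw [Measure.map_apply (by fun_prop) hu,
    Measure.prod_apply (hu.preimage (by fun_prop))]
  have h1 : ∀ x : ℝ, gaussianReal b w (Prod.mk x ⁻¹' ((fun p : ℝ × ℝ => p.1 + p.2) ⁻¹' u))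
      = ∫⁻ y in u, ENNReal.ofReal (gaussianPDFReal b w (y - x)) := by
    intro x
    have hset : (Prod.mk x ⁻¹' ((fun p : ℝ × ℝ => p.1 + p.2) ⁻¹' u)) = (fun y => x + y) ⁻¹' u := rfl
    rw [hset, ← Measure.map_apply (by fun_prop) hu, gaussianReal_map_const_add,
      gaussianReal_apply _ hw u]
    congr 1 with y
    rw [gaussianPDF, gaussianPDFReal_sub]
  simp_rw [h1]
  rw [gaussianReal_of_var_ne_zero a hv]
  have hFmeas : Measurable (Function.uncurry fun x y => ENNReal.ofReal (gaussianPDFReal b w (y - x))) := by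
    apply Measurable.ennreal_ofReal
    exact (measurable_gaussianPDFReal b w).comp (measurable_snd.sub measurable_fst)
  rw [lintegral_withDensity_eq_lintegral_mul _ (measurable_gaussianPDF a v)
    (Measurable.lintegral_prod_right hFmeas)]
  have h2 : ∀ x : ℝ, (gaussianPDF a v * fun x => ∫⁻ y in u, ENNReal.ofReal (gaussianPDFReal b w (y - x))) x
      = ∫⁻ y in u, ENNReal.ofReal (gaussianPDFReal a v x * gaussianPDFReal b w (y - x)) := by
    intro x
    simp only [Pi.mul_apply]
    have hmy : Measurable fun y : ℝ => ENNReal.ofReal (gaussianPDFReal b w (y - x)) :=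
      ((measurable_gaussianPDFReal b w).comp (measurable_id.sub_const x)).ennreal_ofReal
    rw [← lintegral_const_mul _ hmy]
    congr 1 with y
    rw [gaussianPDF, ENNReal.ofReal_mul (gaussianPDFReal_nonneg a v x)]
  simp_rw [h2]
  have hswapm : AEMeasurable (fun p : ℝ × ℝ => ENNReal.ofReal
      (gaussianPDFReal a v p.1 * gaussianPDFReal b w (p.2 - p.1)))
      (volume.prod (volume.restrict u)) :=
    ((((measurable_gaussianPDFReal a v).comp measurable_fst).mul
      ((measurable_gaussianPDFReal b w).comp
        (measurable_snd.sub measurable_fst))).ennreal_ofReal).aemeasurable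
  rw [lintegral_lintegral_swap hswapm]
  have h3 : ∀ y : ℝ, (∫⁻ x, ENNReal.ofReal (gaussianPDFReal a v x * gaussianPDFReal b w (y - x)))
      = gaussianPDF (a+b) (v+w) y := by
    intro y
    rw [← ofReal_integral_eq_lintegral_ofReal (integrable_gaussian_conv a b v w y)
      (Filter.Eventually.of_forall fun x => mul_nonneg (gaussianPDFReal_nonneg a v x) (gaussianPDFReal_nonneg b w _)),
      gaussianPDFReal_conv a b v w hv hw y, gaussianPDF]
  simp_rw [h3]
  rw [← gaussianReal_apply _ hvw u]

theorem map_sum_pi_gaussian (β : ℝ) (n : ℕ) :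
    (Measure.pi fun _ : Fin n => gaussianReal β 1).map (fun z => ∑ i, z i)
      = gaussianReal (n*β) (n : ℝ≥0) := by
  induction n with
  | zero =>
    rw [Measure.pi_of_empty]
    rw [Measure.map_dirac' (f := fun z : Fin 0 → ℝ => ∑ i, z i) (by fun_prop)]
    simp [gaussianReal_zero_var]
  | succ n ih =>
    have hmp := measurePreserving_piFinSuccAbove (fun _ : Fin (n+1) => gaussianReal β 1) 0
    set e := MeasurableEquiv.piFinSuccAbove (fun _ : Fin (n+1) => ℝ) 0 with he
    have hS : Measurable fun z : Fin n → ℝ => ∑ j, z j := by fun_prop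
    have hcomp : (fun z : Fin (n+1) → ℝ => ∑ i, z i) ∘ e.symm
        = fun p : ℝ × (Fin n → ℝ) => p.1 + ∑ j, p.2 j := by
      funext p
      simp only [Function.comp_apply]
      rw [Fin.sum_univ_succAbove (e.symm p) 0]
      simp [he, MeasurableEquiv.piFinSuccAbove]
    calc (Measure.pi fun _ : Fin (n+1) => gaussianReal β 1).map (fun z => ∑ i, z i)
        = (((Measure.pi fun _ : Fin (n+1) => gaussianReal β 1).map e).map
            ((fun z : Fin (n+1) → ℝ => ∑ i, z i) ∘ e.symm)) := by
          rw [Measure.map_map (by rw [hcomp]; fun_prop) e.measurable]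
          congr 1 with z
          simp
      _ = (((gaussianReal β 1).prod (Measure.pi fun _ : Fin n => gaussianReal β 1)).map
            (fun p : ℝ × (Fin n → ℝ) => p.1 + ∑ j, p.2 j)) := by rw [hmp.map_eq, hcomp]
      _ = ((((gaussianReal β 1).prod (Measure.pi fun _ : Fin n => gaussianReal β 1)).map
            (Prod.map id (fun z : Fin n → ℝ => ∑ j, z j))).map (fun q : ℝ × ℝ => q.1 + q.2)) := by
          rw [Measure.map_map (by fun_prop) (measurable_id.prodMap hS)]
          rfl
      _ = (((gaussianReal β 1).prod ((Measure.pi fun _ : Fin n => gaussianReal β 1).map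
            (fun z : Fin n → ℝ => ∑ j, z j))).map (fun q : ℝ × ℝ => q.1 + q.2)) := by
          rw [← Measure.map_prod_map _ _ measurable_id hS]
          rw [Measure.map_id]
      _ = gaussianReal ((n+1 : ℕ) * β) ((n+1 : ℕ) : ℝ≥0) := by
          rw [ih, gaussianReal_conv]
          congr 1
          · push_cast; ring
          · push_cast; ring

lemma lintegral_abs_sub_gaussian (m : ℝ) (v : ℝ≥0) (hv : v ≠ 0) :
    ∫⁻ x, ENNReal.ofReal |x - m| ∂(gaussianReal m v) = ENNReal.ofReal (√(2*v/π)) := by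
  have hvpos : (0:ℝ) < v := lt_of_le_of_ne v.2 (by exact_mod_cast hv.symm)
  have hb : (0:ℝ) < (2*(v:ℝ))⁻¹ := by positivity
  set g : ℝ → ℝ := fun x => (√(2*π*v))⁻¹ * (|x| * rexp (-(2*(v:ℝ))⁻¹ * x^2)) with hg
  have hgeq : ∀ x : ℝ, gaussianPDFReal m v x * |x - m| = g (x - m) := by
    intro x
    rw [gaussianPDFReal, hg]
    have : -(x - m)^2/(2*(v:ℝ)) = -(2*(v:ℝ))⁻¹ * (x-m)^2 := by field_simp
    rw [this]
    ring
  have hgint : Integrable g := ((integrable_abs_mul_exp_neg_mul_sq hb).const_mul _)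
  have hint : Integrable (fun x => gaussianPDFReal m v x * |x - m|) := by
    have := hgint.comp_sub_right m
    exact this.congr (Eventually.of_forall fun x => (hgeq x).symm)
  rw [gaussianReal_of_var_ne_zero m hv,
    lintegral_withDensity_eq_lintegral_mul _ (measurable_gaussianPDF m v)
      (by exact (measurable_id.sub_const m).abs.ennreal_ofReal)]
  have h1 : ∀ x : ℝ, (gaussianPDF m v * fun x => ENNReal.ofReal |x - m|) x
      = ENNReal.ofReal (gaussianPDFReal m v x * |x - m|) := by
    intro x
    simp only [Pi.mul_apply, gaussianPDF]
    rw [← ENNReal.ofReal_mul (gaussianPDFReal_nonneg m v x)]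
  simp_rw [h1]
  rw [← ofReal_integral_eq_lintegral_ofReal hint
    (Eventually.of_forall fun x => mul_nonneg (gaussianPDFReal_nonneg m v x) (abs_nonneg _))]
  congr 1
  rw [integral_congr_ae (Eventually.of_forall hgeq), integral_sub_right_eq_self g m, hg,
    integral_const_mul, integral_abs_mul_exp_neg_mul_sq hb]
  rw [inv_inv, ← Real.sqrt_inv, ← Real.sqrt_sq (by positivity : (0:ℝ) ≤ 2*(v:ℝ)),
    ← Real.sqrt_mul (by positivity)]
  congr 1
  field_simp
  symm
  rw [Real.sqrt_eq_iff_mul_self_eq_of_pos (by positivity)]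
  ring

lemma gaussian_markov (m : ℝ) (v : ℝ≥0) (hv : v ≠ 0) {ε : ℝ} (hε : 0 < ε) :
    ((gaussianReal m v) {x | ε ≤ |x - m|}).toReal ≤ √(2*v/π) / ε := by
  have hmeas : AEMeasurable (fun x : ℝ => ENNReal.ofReal |x - m|) (gaussianReal m v) :=
    ((measurable_id.sub_const m).abs.ennreal_ofReal.aemeasurable)
  have h := mul_meas_ge_le_lintegral₀ (μ := gaussianReal m v) hmeas (ENNReal.ofReal ε)
  rw [lintegral_abs_sub_gaussian m v hv] at h
  have hset : {x : ℝ | ENNReal.ofReal ε ≤ ENNReal.ofReal |x - m|} = {x | ε ≤ |x - m|} := by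
    ext x
    simp [ENNReal.ofReal_le_ofReal_iff (abs_nonneg _)]
  rw [hset] at h
  have h2 : (gaussianReal m v) {x | ε ≤ |x - m|} ≤ ENNReal.ofReal (√(2*v/π)) / ENNReal.ofReal ε := by
    rw [ENNReal.le_div_iff_mul_le (Or.inl (by simp [hε])) (Or.inl ENNReal.ofReal_ne_top)]
    rw [mul_comm]
    exact h
  calc ((gaussianReal m v) {x | ε ≤ |x - m|}).toReal
      ≤ (ENNReal.ofReal (√(2*v/π)) / ENNReal.ofReal ε).toReal := by
        apply ENNReal.toReal_mono _ h2
        exact (ENNReal.div_lt_top ENNReal.ofReal_ne_top (ENNReal.ofReal_pos.mpr hε).ne').ne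
    _ = √(2*v/π) / ε := by
        rw [ENNReal.toReal_div, ENNReal.toReal_ofReal (Real.sqrt_nonneg _),
          ENNReal.toReal_ofReal hε.le]

/-- With `n` i.i.d. `N(β,1)` observations, `β > 1`, and point-mass beliefs at the
posterior means `β̂ₓ = (x + n·Z̄ₙ)/(n+1)` for priors `x ∈ [-η,η]`, the probability
that every posterior mean is at least 1 (so that Strong is rationalizable for all
types with common certainty in these beliefs) is at least
`1 - (1/(β-1))·(√(2/(πn)) + (β+η)/(n+1))`. -/
theorem strong_rationalizable_prob_bound (β η : ℝ) (hβ : 1 < β) (hη : 0 < η)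
    (n : ℕ) (hn : 1 ≤ n) :
    1 - (1 / (β - 1)) * (Real.sqrt (2 / (Real.pi * n)) + (β + η) / ((n : ℝ) + 1))
      ≤ ((Measure.pi fun _ : Fin n => gaussianReal β 1)
          {z | ∀ x ∈ Set.Icc (-η) η,
            (1 : ℝ) ≤ (x + (n : ℝ) * ((∑ i, z i) / (n : ℝ))) / ((n : ℝ) + 1)}).toReal := by
  have hn0 : (n:ℝ) ≠ 0 := by positivity
  have hn1 : (1:ℝ) ≤ (n:ℝ) := by exact_mod_cast hn
  have hβ1 : (0:ℝ) < β - 1 := by linarith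
  set t : ℝ := (n:ℝ) + 1 + η with ht
  set a : ℝ := √(2/(π*(n:ℝ))) with ha
  set c : ℝ := (β + η)/((n:ℝ)+1) with hc
  have ha0 : 0 ≤ a := Real.sqrt_nonneg _
  have hc0 : 0 < c := by positivity
  -- event rewriting
  have hA : {z : Fin n → ℝ | ∀ x ∈ Set.Icc (-η) η,
      (1 : ℝ) ≤ (x + (n : ℝ) * ((∑ i, z i) / (n : ℝ))) / ((n : ℝ) + 1)}
      = (fun z : Fin n → ℝ => ∑ i, z i) ⁻¹' (Ici t) := by
    ext z
    have hnS : (n:ℝ) * ((∑ i, z i) / (n:ℝ)) = ∑ i, z i := by field_simp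
    simp only [Set.mem_setOf_eq, Set.mem_preimage, Set.mem_Ici, hnS]
    constructor
    · intro h
      have h₁ := h (-η) ⟨le_rfl, by linarith⟩
      rw [le_div_iff₀ (by positivity)] at h₁
      rw [ht]; linarith
    · intro h x hx
      rw [le_div_iff₀ (by positivity)]
      have := hx.1
      rw [ht] at h; linarith
  rw [hA, ← Measure.map_apply (by fun_prop) measurableSet_Ici, map_sum_pi_gaussian β n]
  set G := gaussianReal ((n:ℝ)*β) (n : ℝ≥0) with hG
  have hnn0 : (n : ℝ≥0) ≠ 0 := by
    have : n ≠ 0 := by omega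
    exact_mod_cast this
  have hprob : IsProbabilityMeasure G := by rw [hG]; infer_instance
  by_cases hcase : β - 1 ≤ a + c
  · have h1 : (1:ℝ) ≤ (1/(β-1)) * (a + c) := by
      rw [one_div, inv_mul_eq_div, le_div_iff₀ hβ1]
      linarith
    have h2 : (0:ℝ) ≤ (G (Ici t)).toReal := ENNReal.toReal_nonneg
    linarith
  push_neg at hcase
  set r : ℝ := β - 1 - c with hr
  have hra : a < r := by rw [hr]; linarith
  have hr0 : 0 < r := lt_of_le_of_lt ha0 hra
  -- inclusion
  have hnβ : (n:ℝ)*β ≥ t := by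
    have : c < β - 1 := by nlinarith
    rw [hc] at this
    rw [ht]
    rw [div_lt_iff₀ (by positivity)] at this
    nlinarith
  have hincl : Iio t ⊆ {s : ℝ | (n:ℝ)*r ≤ |s - (n:ℝ)*β|} := by
    intro s hs
    simp only [Set.mem_Iio] at hs
    simp only [Set.mem_setOf_eq]
    have hnβ' : (n:ℝ)*β ≥ (n:ℝ)+1+η := hnβ
    have h1 : (1:ℝ) + η ≤ (n:ℝ) * c := by
      rw [hc, ← mul_div_assoc, le_div_iff₀ (by positivity)]
      nlinarith
    have h2 : (n:ℝ)*r ≤ (n:ℝ)*β - t := by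
      rw [hr, ht]
      nlinarith
    have h3 : (n:ℝ)*β - s > (n:ℝ)*β - t := by linarith
    rw [abs_sub_comm, abs_of_nonneg (by linarith)]
    linarith
  -- complement
  have hcompl : (G (Ici t)).toReal = 1 - (G (Iio t)).toReal := by
    have h := measure_add_measure_compl (μ := G) (measurableSet_Ici (a := t))
    rw [compl_Ici, measure_univ] at h
    have h' := congrArg ENNReal.toReal h
    rw [ENNReal.toReal_add (measure_ne_top G _) (measure_ne_top G _), ENNReal.toReal_one] at h'
    linarith
  -- markov bound
  have hmark : (G (Iio t)).toReal ≤ a / r := by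
    have hmono : (G (Iio t)).toReal ≤ (G {s : ℝ | (n:ℝ)*r ≤ |s - (n:ℝ)*β|}).toReal := by
      apply ENNReal.toReal_mono (measure_ne_top G _) (measure_mono hincl)
    have hε : (0:ℝ) < (n:ℝ)*r := by positivity
    have hm := gaussian_markov ((n:ℝ)*β) (n : ℝ≥0) hnn0 hε
    have hsqrt : √(2*((n:ℝ≥0):ℝ)/π) = (n:ℝ) * a := by
      rw [ha, show (2*((n:ℝ≥0):ℝ)/π) = (n:ℝ)^2 * (2/(π*(n:ℝ))) by push_cast; field_simp,
        Real.sqrt_mul (sq_nonneg _), Real.sqrt_sq (by positivity)]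
    rw [hsqrt] at hm
    have : (n:ℝ) * a / ((n:ℝ)*r) = a / r := by
      rw [mul_div_mul_left _ _ hn0]
    rw [this] at hm
    exact le_trans hmono hm
  have halg : a / r ≤ (1/(β-1)) * (a + c) := by
    rw [one_div, inv_mul_eq_div, div_le_div_iff₀ hr0 hβ1]
    nlinarith
  linarith
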